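/- Let S be a monoid such that for every set I and every ultrafilter Φ on I, the ultrapower S^I/Φ of the left S-act S satisfies condition (P). Then for all s, t ∈ S the set R(s,t) = {(u,v) ∈ S × S | su = tv} is either empty or finitely generated as a subact of the right S-act S × S: there exist (u₁,v₁), …, (uₙ,vₙ) ∈ R(s,t) such that R(s,t) = {(uᵢc, vᵢc) | 1 ≤ i ≤ n, c ∈ S}. -/

import Mathlib

universe u

/-- Condition (P) for a left `S`-act `B`. -/
def CondP (S : Type u) [Monoid S] (B : Type u) [MulAction S B] : Prop :=
  ∀ (s t : S) (x y : B), s • x = t • y →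
    ∃ (z : B) (s' t' : S), x = s' • z ∧ y = t' • z ∧ s * s' = t * t'

/-- if every ultrapower `S^I/Φ` of the left `S`-act `S` satisfies
condition (P), then for all `s, t ∈ S` the set `R(s,t) = {(u,v) | su = tv}` is
empty or finitely generated as a subact of the right `S`-act `S × S`:
`R(s,t) = {(uᵢc, vᵢc) | 1 ≤ i ≤ n, c ∈ S}` with each `(uᵢ,vᵢ) ∈ R(s,t)`. -/
theorem stmt_5 {S : Type u} [Monoid S]
    (h : ∀ (I : Type u) (Φ : Ultrafilter I), CondP S (Filter.Germ (Φ : Filter I) S))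
    (s t : S) :
    {p : S × S | s * p.1 = t * p.2} = ∅ ∨
    ∃ (n : ℕ) (w : Fin n → S × S),
      (∀ i, s * (w i).1 = t * (w i).2) ∧
      {p : S × S | s * p.1 = t * p.2} =
        {p : S × S | ∃ (i : Fin n) (c : S), p = ((w i).1 * c, (w i).2 * c)} := by
  classical
  set R : Set (S × S) := {p : S × S | s * p.1 = t * p.2} with hRdef
  set Agen : S × S → Set (S × S) :=
    fun q => {p : S × S | ∃ c : S, p = (q.1 * c, q.2 * c)} with hAdef
  -- key: finitely many cyclic subacts generated by elements of R cover R
  have key : ∃ F : Finset (S × S), (↑F : Set (S × S)) ⊆ R ∧ R ⊆ ⋃ q ∈ F, Agen q := by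
    by_contra hk
    push_neg at hk
    -- build an ultrafilter containing R and the complement of every Agen q, q ∈ R
    set 𝒮 : Set (Set (S × S)) := insert R ((fun q => (Agen q)ᶜ) '' R) with h𝒮
    have hfip : ∀ T : Finset (Set (S × S)), (↑T : Set (Set (S × S))) ⊆ 𝒮 →
        (⋂₀ (↑T : Set (Set (S × S)))).Nonempty := by
      intro T hT
      -- choose a generator for each complement in T
      have hchoice : ∀ u ∈ T, u ≠ R → ∃ q ∈ R, u = (Agen q)ᶜ := by
        intro u hu hne
        rcases hT hu with h1 | h2
        · exact absurd h1 hne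
        · rcases h2 with ⟨q, hq, rfl⟩; exact ⟨q, hq, rfl⟩
      choose! q hqR hqE using hchoice
      set F : Finset (S × S) := (T.filter (· ≠ R)).image (fun u => q u) with hF
      have hFR : (↑F : Set (S × S)) ⊆ R := by
        intro x hx
        simp only [hF, Finset.coe_image, Set.mem_image, Finset.coe_filter,
          Set.mem_setOf_eq] at hx
        rcases hx with ⟨u, ⟨hu, hne⟩, rfl⟩
        exact hqR u hu hne
      rcases Set.not_subset.mp (hk F hFR) with ⟨p, hpR, hpU⟩
      refine ⟨p, ?_⟩
      intro u hu
      simp only [Finset.mem_coe] at hu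
      by_cases hne : u = R
      · exact hne ▸ hpR
      · have hE := hqE u hu hne
        have hqF : q u ∈ F := by
          simp only [hF, Finset.mem_image, Finset.mem_filter]
          exact ⟨u, ⟨hu, hne⟩, rfl⟩
        rw [hE]
        intro hmem
        exact hpU (Set.mem_biUnion hqF hmem)
    rcases Ultrafilter.exists_ultrafilter_of_finite_inter_nonempty 𝒮 hfip with ⟨Φ, hΦ⟩
    have hRΦ : R ∈ Φ := hΦ (Set.mem_insert _ _)
    -- apply condition (P) in the ultrapower
    have hP := h (S × S) Φ s t (↑(Prod.fst : S × S → S)) (↑(Prod.snd : S × S → S))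
    have heq : s • ((Prod.fst : S × S → S) : Filter.Germ (Φ : Filter (S × S)) S)
        = t • ((Prod.snd : S × S → S) : Filter.Germ (Φ : Filter (S × S)) S) := by
      rw [← Filter.Germ.coe_smul, ← Filter.Germ.coe_smul, Filter.Germ.coe_eq]
      filter_upwards [hRΦ] with p hp
      simpa [smul_eq_mul, hRdef] using hp
    rcases hP heq with ⟨z, s', t', hz1, hz2, hst⟩
    induction z using Filter.Germ.inductionOn with
    | h z0 =>
    rw [← Filter.Germ.coe_smul, Filter.Germ.coe_eq] at hz1 hz2
    have hs'R : (s', t') ∈ R := hst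
    have hcomp : (Agen (s', t'))ᶜ ∈ Φ :=
      hΦ (Set.mem_insert_of_mem _ ⟨(s', t'), hs'R, rfl⟩)
    have hmem : ({p : S × S | p.1 = s' * z0 p} ∩ ({p : S × S | p.2 = t' * z0 p} ∩
        (Agen (s', t'))ᶜ)) ∈ (Φ : Filter (S × S)) := by
      refine Filter.inter_mem ?_ (Filter.inter_mem ?_ hcomp)
      · filter_upwards [hz1] with p hp using by simpa [smul_eq_mul] using hp
      · filter_upwards [hz2] with p hp using by simpa [smul_eq_mul] using hp
    have : ({p : S × S | p.1 = s' * z0 p} ∩ ({p : S × S | p.2 = t' * z0 p} ∩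
        (Agen (s', t'))ᶜ)).Nonempty := Filter.nonempty_of_mem hmem
    rcases this with ⟨p, hp⟩
    simp only [Set.mem_inter_iff, Set.mem_setOf_eq, Set.mem_compl_iff] at hp
    exact hp.2.2 ⟨z0 p, by rw [Prod.ext_iff]; exact ⟨hp.1, hp.2.1⟩⟩
  -- assemble the conclusion
  rcases key with ⟨F, hFR, hcov⟩
  right
  refine ⟨F.card, fun i => (F.equivFin.symm i : S × S), ?_, ?_⟩
  · intro i; exact hFR (F.equivFin.symm i).2
  · ext p
    simp only [Set.mem_setOf_eq]
    constructor
    · intro hp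
      have hq := hcov hp
      simp only [hAdef, Set.mem_iUnion, Set.mem_setOf_eq] at hq
      rcases hq with ⟨q, hqF, c, hc⟩
      exact ⟨F.equivFin ⟨q, hqF⟩, c, by simpa using hc⟩
    · rintro ⟨i, c, rfl⟩
      have hi := hFR (F.equivFin.symm i).2
      show s * (_ * c) = t * (_ * c)
      rw [← mul_assoc, ← mul_assoc, hi]
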